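/- arXiv:1707.04837 — 3 statements merged into one kernel-verified Lean document; each statement's English description precedes it below -/
import Mathlib

section
/- Let d_n ∈ (0,∞) be the unique solution of a(e^{−d_n}) = n for large n. Then b(e^{−d_n}) ~ 3 n^{4/3}/(2ζ(3))^{1/3} as n→∞. -/
open Filter Asymptotics

/-- `a(r) = Σ_{j≥1} j² rʲ/(1-rʲ)`. -/
noncomputable def aQ (r : ℝ) : ℝ := ∑' j : ℕ, ((j + 1 : ℝ) ^ 2 * r ^ (j + 1)) / (1 - r ^ (j + 1))

/-- `b(r) = Σ_{j≥1} j³ rʲ/(1-rʲ)²`. -/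
noncomputable def bQ (r : ℝ) : ℝ := ∑' j : ℕ, ((j + 1 : ℝ) ^ 3 * r ^ (j + 1)) / (1 - r ^ (j + 1)) ^ 2

/-- `ζ(3)` as a real number. -/
noncomputable def zeta3 : ℝ := (riemannZeta 3).re

section Aux

open Real Topology

/- ### Nat.choose arithmetic -/

lemma PP_nat_choose2 (n : ℕ) : ((n+2).choose 2) * 2 = (n+2)*(n+1) := by
  have h := Nat.add_one_mul_choose_eq (n+1) 1
  rw [Nat.choose_one_right] at h
  exact h.symm

lemma PP_nat_choose3 (n : ℕ) : ((n+3).choose 3) * 6 = (n+3)*((n+2)*(n+1)) := by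
  have h := Nat.add_one_mul_choose_eq (n+2) 2
  calc ((n+3).choose 3) * 6 = ((n+3).choose 3 * 3) * 2 := by ring
    _ = ((n+2+1) * (n+2).choose 2) * 2 := by rw [h]
    _ = (n+3) * ((n+2).choose 2 * 2) := by ring
    _ = (n+3)*((n+2)*(n+1)) := by rw [PP_nat_choose2]

/- ### closed forms for power-times-geometric series -/

lemma PP_hasSum_sq_geom {x : ℝ} (hx0 : 0 ≤ x) (hx1 : x < 1) :
    HasSum (fun j : ℕ => ((j : ℝ) + 1) ^ 2 * x ^ (j + 1)) (x * (1 + x) / (1 - x) ^ 3) := by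
  have hn : ‖x‖ < 1 := by rwa [Real.norm_eq_abs, abs_of_nonneg hx0]
  have hx : (1 : ℝ) - x ≠ 0 := by intro h; nlinarith
  have key := ((hasSum_choose_mul_geometric_of_norm_lt_one 2 hn).mul_left 2 |>.sub
      (hasSum_choose_mul_geometric_of_norm_lt_one 1 hn)).mul_left x
  convert key using 1
  · rfl
  · funext j
    have hc : (((j+2).choose 2 : ℕ) : ℝ) * 2 = ((j:ℝ)+2)*((j:ℝ)+1) := by
      have h := congrArg (Nat.cast : ℕ → ℝ) (PP_nat_choose2 j)
      push_cast at h; linarith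
    rw [Nat.choose_one_right]
    push_cast
    linear_combination (-(x^(j+1))) * hc
  · field_simp
    ring

lemma PP_hasSum_cube_geom {x : ℝ} (hx0 : 0 ≤ x) (hx1 : x < 1) :
    HasSum (fun j : ℕ => ((j : ℝ) + 1) ^ 3 * x ^ (j + 1))
      (x * (1 + 4*x + x^2) / (1 - x) ^ 4) := by
  have hn : ‖x‖ < 1 := by rwa [Real.norm_eq_abs, abs_of_nonneg hx0]
  have hx : (1 : ℝ) - x ≠ 0 := by intro h; nlinarith
  have key := (((hasSum_choose_mul_geometric_of_norm_lt_one 3 hn).mul_left 6 |>.sub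
      ((hasSum_choose_mul_geometric_of_norm_lt_one 2 hn).mul_left 6)).add
      (hasSum_choose_mul_geometric_of_norm_lt_one 1 hn)).mul_left x
  convert key using 1
  · rfl
  · funext j
    have hc2 : (((j+2).choose 2 : ℕ) : ℝ) * 2 = ((j:ℝ)+2)*((j:ℝ)+1) := by
      have h := congrArg (Nat.cast : ℕ → ℝ) (PP_nat_choose2 j)
      push_cast at h; linarith
    have hc3 : (((j+3).choose 3 : ℕ) : ℝ) * 6 = ((j:ℝ)+3)*(((j:ℝ)+2)*((j:ℝ)+1)) := by
      have h := congrArg (Nat.cast : ℕ → ℝ) (PP_nat_choose3 j)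
      push_cast at h; linarith
    rw [Nat.choose_one_right]
    push_cast
    linear_combination (-(x^(j+1))) * hc3 + (3*(x^(j+1))) * hc2
  · field_simp
    ring

lemma PP_hasSum_lin_geom {y : ℝ} (hy0 : 0 ≤ y) (hy1 : y < 1) :
    HasSum (fun k : ℕ => ((k : ℝ) + 1) * y ^ (k + 1)) (y / (1 - y) ^ 2) := by
  have hn : ‖y‖ < 1 := by rwa [Real.norm_eq_abs, abs_of_nonneg hy0]
  have key := (hasSum_choose_mul_geometric_of_norm_lt_one 1 hn).mul_left y
  convert key using 1
  · rfl
  · funext k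
    rw [Nat.choose_one_right]
    push_cast
    ring
  · rw [div_eq_mul_inv, pow_succ, pow_one]
    field_simp

/- ### The functions Φ and Ψ -/

noncomputable def Phi (s : ℝ) : ℝ :=
  s^3 * (exp (-s) * (1 + exp (-s)) / (1 - exp (-s))^3)

noncomputable def Psi (s : ℝ) : ℝ :=
  s^4 * (exp (-s) * (1 + 4*exp (-s) + exp (-s)^2) / (1 - exp (-s))^4)

lemma PP_exp_neg_lt_one {s : ℝ} (hs : 0 < s) : exp (-s) < 1 := by
  rw [exp_lt_one_iff]; linarith

lemma PP_exp_aux {s : ℝ} (hs : 0 < s) (n : ℕ) (hn : 0 < n) :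
    exp (-s) * (1 + s/n)^n ≤ 1 := by
  have h1 : (1 + s/n) ≤ exp (s/n) := by
    have := Real.add_one_le_exp (s/n); linarith
  have h2 : (1 + s/n)^n ≤ (exp (s/n))^n :=
    pow_le_pow_left₀ (by positivity) h1 n
  have h3 : (exp (s/n))^n = exp s := by
    rw [← Real.exp_nat_mul]
    congr 1
    field_simp
  calc exp (-s) * (1 + s/n)^n ≤ exp (-s) * exp s := by
        rw [← h3]; exact mul_le_mul_of_nonneg_left h2 (exp_pos _).le
    _ = 1 := by rw [← exp_add]; simp

lemma PP_one_sub_exp_aux {s : ℝ} (hs : 0 < s) : s ≤ (1 + s) * (1 - exp (-s)) := by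
  have h := PP_exp_aux hs 1
  simp only [Nat.cast_one, pow_one, div_one] at h
  have h1 := h one_pos
  nlinarith [exp_pos (-s)]

lemma PP_Phi_nonneg {s : ℝ} (hs : 0 < s) : 0 ≤ Phi s := by
  have h1 : (0:ℝ) ≤ 1 - exp (-s) := by linarith [PP_exp_neg_lt_one hs]
  have h2 := (exp_pos (-s)).le
  unfold Phi
  apply mul_nonneg (pow_nonneg hs.le 3)
  apply div_nonneg (by nlinarith) (by positivity)

lemma PP_Psi_nonneg {s : ℝ} (hs : 0 < s) : 0 ≤ Psi s := by
  have h1 : (0:ℝ) ≤ 1 - exp (-s) := by linarith [PP_exp_neg_lt_one hs]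
  have h2 := (exp_pos (-s)).le
  unfold Psi
  apply mul_nonneg (pow_nonneg hs.le 4)
  apply div_nonneg (by nlinarith [sq_nonneg (exp (-s))]) (by positivity)

lemma PP_Phi_bound {s : ℝ} (hs : 0 < s) : Phi s ≤ 54 := by
  set x := exp (-s) with hxdef
  have hx0 : 0 < x := exp_pos _
  have hx1 : x < 1 := PP_exp_neg_lt_one hs
  have h1x : 0 < 1 - x := by linarith
  have hA : s^3 ≤ (1+s)^3 * (1-x)^3 := by
    rw [← mul_pow]; exact pow_le_pow_left₀ hs.le (PP_one_sub_exp_aux hs) 3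
  have hB : x * (1+s)^3 ≤ 27 := by
    have h3 := PP_exp_aux hs 3 (by norm_num)
    have : (1+s)^3 ≤ 27 * (1 + s/3)^3 := by nlinarith [sq_nonneg s, sq_nonneg (s/3)]
    nlinarith [pow_nonneg (by positivity : (0:ℝ) ≤ 1 + s/3) 3]
  unfold Phi
  rw [← hxdef, ← mul_div_assoc, div_le_iff₀ (by positivity)]
  calc s^3 * (x * (1+x)) ≤ ((1+s)^3 * (1-x)^3) * (x * (1+x)) :=
        mul_le_mul_of_nonneg_right hA (by positivity)
    _ = (x * (1+s)^3) * ((1-x)^3 * (1+x)) := by ring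
    _ ≤ 27 * ((1-x)^3 * 2) := by
        apply mul_le_mul hB (by nlinarith [pow_nonneg h1x.le 3]) (by positivity) (by norm_num)
    _ = 54 * (1-x)^3 := by ring

lemma PP_Psi_bound {s : ℝ} (hs : 0 < s) : Psi s ≤ 1536 := by
  set x := exp (-s) with hxdef
  have hx0 : 0 < x := exp_pos _
  have hx1 : x < 1 := PP_exp_neg_lt_one hs
  have h1x : 0 < 1 - x := by linarith
  have hA : s^4 ≤ (1+s)^4 * (1-x)^4 := by
    rw [← mul_pow]; exact pow_le_pow_left₀ hs.le (PP_one_sub_exp_aux hs) 4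
  have hB : x * (1+s)^4 ≤ 256 := by
    have h4 := PP_exp_aux hs 4 (by norm_num)
    have : (1+s)^4 ≤ 256 * (1 + s/4)^4 := by nlinarith [sq_nonneg s, sq_nonneg (s/4), sq_nonneg (s + s^2/4)]
    nlinarith [pow_nonneg (by positivity : (0:ℝ) ≤ 1 + s/4) 4]
  unfold Psi
  rw [← hxdef, ← mul_div_assoc, div_le_iff₀ (by positivity)]
  calc s^4 * (x * (1 + 4*x + x^2)) ≤ ((1+s)^4 * (1-x)^4) * (x * (1 + 4*x + x^2)) :=
        mul_le_mul_of_nonneg_right hA (by positivity)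
    _ = (x * (1+s)^4) * ((1-x)^4 * (1 + 4*x + x^2)) := by ring
    _ ≤ 256 * ((1-x)^4 * 6) := by
        apply mul_le_mul hB ?_ (by positivity) (by norm_num)
        exact mul_le_mul_of_nonneg_left (by nlinarith) (pow_nonneg h1x.le 4)
    _ = 1536 * (1-x)^4 := by ring

lemma PP_tendsto_div_one_sub_exp :
    Tendsto (fun s : ℝ => s / (1 - exp (-s))) (𝓝[>] 0) (𝓝 1) := by
  have hderiv : HasDerivAt (fun s : ℝ => 1 - exp (-s)) 1 0 := by
    have h1 : HasDerivAt (fun s : ℝ => exp (-s)) (-1) 0 := by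
      have := (Real.hasDerivAt_exp (-0)).comp 0 (hasDerivAt_neg 0)
      simp at this; exact this
    have := (hasDerivAt_const (0:ℝ) (1:ℝ)).sub h1
    simp at this; exact this
  have hslope := hasDerivAt_iff_tendsto_slope.1 hderiv
  have h2 : Tendsto (fun s : ℝ => (1 - exp (-s)) / s) (𝓝[>] 0) (𝓝 1) := by
    have h := hslope.mono_left (nhdsWithin_mono (0:ℝ) (fun x (hx : x ∈ Set.Ioi 0) => ne_of_gt hx))
    refine h.congr (fun s => ?_)
    simp [slope_def_field]
  have h3 := h2.inv₀ one_ne_zero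
  simpa [inv_div] using h3

lemma PP_Phi_tendsto : Tendsto Phi (𝓝[>] (0:ℝ)) (𝓝 2) := by
  have h2 : Tendsto (fun s : ℝ => exp (-s) * (1 + exp (-s))) (𝓝[>] (0:ℝ)) (𝓝 2) := by
    have hc : Continuous fun s : ℝ => exp (-s) * (1 + exp (-s)) := by continuity
    have := hc.tendsto 0
    norm_num at this
    exact this.mono_left nhdsWithin_le_nhds
  have h1 := (PP_tendsto_div_one_sub_exp.pow 3).mul h2
  norm_num at h1
  refine Tendsto.congr' ?_ h1
  filter_upwards [self_mem_nhdsWithin] with s hs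
  have h1x : (1:ℝ) - exp (-s) ≠ 0 := by
    have := PP_exp_neg_lt_one (Set.mem_Ioi.1 hs); linarith
  unfold Phi
  rw [div_pow]
  field_simp

lemma PP_Psi_tendsto : Tendsto Psi (𝓝[>] (0:ℝ)) (𝓝 6) := by
  have h2 : Tendsto (fun s : ℝ => exp (-s) * (1 + 4*exp (-s) + exp (-s)^2))
      (𝓝[>] (0:ℝ)) (𝓝 6) := by
    have hc : Continuous fun s : ℝ => exp (-s) * (1 + 4*exp (-s) + exp (-s)^2) := by continuity
    have := hc.tendsto 0
    norm_num at this
    exact this.mono_left nhdsWithin_le_nhds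
  have h1 := (PP_tendsto_div_one_sub_exp.pow 4).mul h2
  norm_num at h1
  refine Tendsto.congr' ?_ h1
  filter_upwards [self_mem_nhdsWithin] with s hs
  have h1x : (1:ℝ) - exp (-s) ≠ 0 := by
    have := PP_exp_neg_lt_one (Set.mem_Ioi.1 hs); linarith
  unfold Psi
  rw [div_pow]
  field_simp

/- ### rearrangement of the double sums -/

lemma PP_exp_pow_eq {t : ℝ} (k : ℕ) : Real.exp (-(((k:ℝ)+1)*t)) = (Real.exp (-t))^(k+1) := by
  rw [← Real.exp_nat_mul]
  congr 1
  push_cast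
  ring

lemma PP_pow_div_aux (n : ℕ) (a b c : ℝ) (hb : b ≠ 0) : (b*a)^n * c / b^n = a^n * c := by
  rw [mul_pow]
  rw [mul_assoc, mul_comm (b^n), mul_div_assoc, div_self (pow_ne_zero n hb), mul_one]

lemma PP_pow4_div_aux (a b c : ℝ) (hb : b ≠ 0) : (b*a)^4 * c / b^3 = b * (a^4 * c) := by
  field_simp

set_option maxHeartbeats 1000000 in
lemma PP_aQ_eq {t : ℝ} (ht : 0 < t) :
    t^3 * aQ (Real.exp (-t)) = ∑' k : ℕ, Phi (((k:ℝ)+1)*t) / ((k:ℝ)+1)^3 := by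
  set x := Real.exp (-t) with hxdef
  have hx0 : 0 < x := exp_pos _
  have hx1 : x < 1 := PP_exp_neg_lt_one ht
  have hxp1 : ∀ m : ℕ, x ^ (m+1) < 1 := fun m => pow_lt_one₀ hx0.le hx1 (Nat.succ_ne_zero m)
  have hxp0 : ∀ m : ℕ, 0 < x ^ (m+1) := fun m => pow_pos hx0 _
  have hinner : ∀ j : ℕ, HasSum (fun k : ℕ => ((j:ℝ)+1)^2 * x^((j+1)*(k+1)))
      (((j:ℝ)+1)^2 * x^(j+1) / (1 - x^(j+1))) := by
    intro j
    have hg : HasSum (fun k : ℕ => (x^(j+1))^k) (1 - x^(j+1))⁻¹ :=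
      hasSum_geometric_of_lt_one (hxp0 j).le (hxp1 j)
    have h2 := hg.mul_left (((j:ℝ)+1)^2 * x^(j+1))
    have hterm : (fun k : ℕ => ((j:ℝ)+1)^2 * x^((j+1)*(k+1)))
        = fun k : ℕ => ((j:ℝ)+1)^2 * x^(j+1) * (x^(j+1))^k := by
      funext k
      rw [← pow_mul, mul_assoc, ← pow_add]
      congr 2
      ring
    rw [hterm, div_eq_mul_inv]
    exact h2
  have hF : Summable (fun p : ℕ × ℕ => ((p.1:ℝ)+1)^2 * x^((p.1+1)*(p.2+1))) := by
    have hs1 : Summable (fun j : ℕ => ((j:ℝ)+1)^2 * x^(j+1)) :=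
      (PP_hasSum_sq_geom hx0.le hx1).summable
    have hs2 : Summable (fun k : ℕ => x^k) := summable_geometric_of_lt_one hx0.le hx1
    have hgsum : Summable (fun p : ℕ × ℕ => (((p.1:ℝ)+1)^2 * x^(p.1+1)) * x^(p.2)) :=
      hs1.mul_of_nonneg hs2 (fun j => by positivity) (fun k => by positivity)
    have hnn : ∀ p : ℕ × ℕ, 0 ≤ ((p.1:ℝ)+1)^2 * x^((p.1+1)*(p.2+1)) := fun p => by positivity
    have hle : ∀ p : ℕ × ℕ, ((p.1:ℝ)+1)^2 * x^((p.1+1)*(p.2+1))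
        ≤ (((p.1:ℝ)+1)^2 * x^(p.1+1)) * x^(p.2) := by
      intro p
      have hle2 : p.1 + 1 + p.2 ≤ (p.1+1)*(p.2+1) := by nlinarith [p.1.zero_le, p.2.zero_le]
      have h3 := pow_le_pow_of_le_one hx0.le hx1.le hle2
      calc ((p.1:ℝ)+1)^2 * x^((p.1+1)*(p.2+1)) ≤ ((p.1:ℝ)+1)^2 * x^(p.1+1+p.2) :=
            mul_le_mul_of_nonneg_left h3 (by positivity)
        _ = (((p.1:ℝ)+1)^2 * x^(p.1+1)) * x^(p.2) := by rw [pow_add]; ring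
    exact Summable.of_nonneg_of_le hnn hle hgsum
  have hOuter : ∀ k : ℕ, HasSum (fun j : ℕ => ((j:ℝ)+1)^2 * x^((j+1)*(k+1)))
      (x^(k+1) * (1 + x^(k+1)) / (1 - x^(k+1))^3) := by
    intro k
    have h := PP_hasSum_sq_geom (x := x^(k+1)) (hxp0 k).le (hxp1 k)
    have hterm : (fun j : ℕ => ((j:ℝ)+1)^2 * x^((j+1)*(k+1)))
        = fun j : ℕ => ((j:ℝ)+1)^2 * (x^(k+1))^(j+1) := by
      funext j
      rw [← pow_mul]
      congr 2
      ring
    rw [hterm]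
    exact h
  have hswap : (∑' j : ℕ, ∑' k : ℕ, ((j:ℝ)+1)^2 * x^((j+1)*(k+1)))
      = ∑' k : ℕ, ∑' j : ℕ, ((j:ℝ)+1)^2 * x^((j+1)*(k+1)) := by
    have hF' : Summable (Function.uncurry fun (j k : ℕ) => ((j:ℝ)+1)^2 * x^((j+1)*(k+1))) := hF
    exact (Summable.tsum_comm hF').symm
  have haQ : aQ x = ∑' k : ℕ, x^(k+1) * (1 + x^(k+1)) / (1 - x^(k+1))^3 := by
    unfold aQ
    calc (∑' j : ℕ, ((j + 1 : ℝ) ^ 2 * x ^ (j + 1)) / (1 - x ^ (j + 1)))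
        = ∑' j : ℕ, ∑' k : ℕ, ((j:ℝ)+1)^2 * x^((j+1)*(k+1)) := by
          refine tsum_congr (fun j => ?_)
          exact ((hinner j).tsum_eq).symm
      _ = ∑' k : ℕ, ∑' j : ℕ, ((j:ℝ)+1)^2 * x^((j+1)*(k+1)) := hswap
      _ = ∑' k : ℕ, x^(k+1) * (1 + x^(k+1)) / (1 - x^(k+1))^3 := by
          refine tsum_congr (fun k => ?_)
          exact (hOuter k).tsum_eq
  rw [haQ, ← tsum_mul_left]
  refine tsum_congr (fun k => ?_)
  have hk : ((k:ℝ)+1) ≠ 0 := by positivity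
  unfold Phi
  rw [PP_exp_pow_eq k, ← hxdef, PP_pow_div_aux 3 t ((k:ℝ)+1) _ hk]

set_option maxHeartbeats 1000000 in
lemma PP_bQ_eq {t : ℝ} (ht : 0 < t) :
    t^4 * bQ (Real.exp (-t)) = ∑' k : ℕ, Psi (((k:ℝ)+1)*t) / ((k:ℝ)+1)^3 := by
  set x := Real.exp (-t) with hxdef
  have hx0 : 0 < x := exp_pos _
  have hx1 : x < 1 := PP_exp_neg_lt_one ht
  have hxp1 : ∀ m : ℕ, x ^ (m+1) < 1 := fun m => pow_lt_one₀ hx0.le hx1 (Nat.succ_ne_zero m)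
  have hxp0 : ∀ m : ℕ, 0 < x ^ (m+1) := fun m => pow_pos hx0 _
  have hinner : ∀ j : ℕ, HasSum (fun k : ℕ => ((j:ℝ)+1)^3 * (((k:ℝ)+1) * x^((j+1)*(k+1))))
      (((j:ℝ)+1)^3 * x^(j+1) / (1 - x^(j+1))^2) := by
    intro j
    have hg : HasSum (fun k : ℕ => ((k:ℝ)+1) * (x^(j+1))^(k+1))
        (x^(j+1) / (1 - x^(j+1))^2) := PP_hasSum_lin_geom (hxp0 j).le (hxp1 j)
    have h2 := hg.mul_left (((j:ℝ)+1)^3)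
    have hterm : (fun k : ℕ => ((j:ℝ)+1)^3 * (((k:ℝ)+1) * x^((j+1)*(k+1))))
        = fun k : ℕ => ((j:ℝ)+1)^3 * (((k:ℝ)+1) * (x^(j+1))^(k+1)) := by
      funext k
      rw [← pow_mul]
    rw [hterm]
    have hval : ((j:ℝ)+1)^3 * x^(j+1) / (1 - x^(j+1))^2
        = ((j:ℝ)+1)^3 * (x^(j+1) / (1 - x^(j+1))^2) := by
      rw [mul_div_assoc]
    rw [hval]
    exact h2
  have hF : Summable (fun p : ℕ × ℕ => ((p.1:ℝ)+1)^3 * (((p.2:ℝ)+1) * x^((p.1+1)*(p.2+1)))) := by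
    have hs1 : Summable (fun j : ℕ => ((j:ℝ)+1)^3 * x^(j+1)) :=
      (PP_hasSum_cube_geom hx0.le hx1).summable
    have hs2 : Summable (fun k : ℕ => ((k:ℝ)+1) * x^k) := by
      have h := (hasSum_choose_mul_geometric_of_norm_lt_one 1
        (by rwa [Real.norm_eq_abs, abs_of_nonneg hx0.le] : ‖x‖ < 1)).summable
      refine h.congr (fun k => ?_)
      rw [Nat.choose_one_right]
      push_cast
      ring
    have hgsum : Summable (fun p : ℕ × ℕ => (((p.1:ℝ)+1)^3 * x^(p.1+1)) * (((p.2:ℝ)+1) * x^(p.2))) :=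
      hs1.mul_of_nonneg hs2 (fun j => by positivity) (fun k => by positivity)
    have hnn : ∀ p : ℕ × ℕ, 0 ≤ ((p.1:ℝ)+1)^3 * (((p.2:ℝ)+1) * x^((p.1+1)*(p.2+1))) :=
      fun p => by positivity
    have hle : ∀ p : ℕ × ℕ, ((p.1:ℝ)+1)^3 * (((p.2:ℝ)+1) * x^((p.1+1)*(p.2+1)))
        ≤ (((p.1:ℝ)+1)^3 * x^(p.1+1)) * (((p.2:ℝ)+1) * x^(p.2)) := by
      intro p
      have hle2 : p.1 + 1 + p.2 ≤ (p.1+1)*(p.2+1) := by nlinarith [p.1.zero_le, p.2.zero_le]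
      have h3 := pow_le_pow_of_le_one hx0.le hx1.le hle2
      calc ((p.1:ℝ)+1)^3 * (((p.2:ℝ)+1) * x^((p.1+1)*(p.2+1)))
          ≤ ((p.1:ℝ)+1)^3 * (((p.2:ℝ)+1) * x^(p.1+1+p.2)) := by
            apply mul_le_mul_of_nonneg_left _ (by positivity)
            exact mul_le_mul_of_nonneg_left h3 (by positivity)
        _ = (((p.1:ℝ)+1)^3 * x^(p.1+1)) * (((p.2:ℝ)+1) * x^(p.2)) := by rw [pow_add]; ring
    exact Summable.of_nonneg_of_le hnn hle hgsum
  have hOuter : ∀ k : ℕ, HasSum (fun j : ℕ => ((j:ℝ)+1)^3 * (((k:ℝ)+1) * x^((j+1)*(k+1))))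
      (((k:ℝ)+1) * (x^(k+1) * (1 + 4*x^(k+1) + (x^(k+1))^2) / (1 - x^(k+1))^4)) := by
    intro k
    have h := (PP_hasSum_cube_geom (x := x^(k+1)) (hxp0 k).le (hxp1 k)).mul_left ((k:ℝ)+1)
    have hterm : (fun j : ℕ => ((j:ℝ)+1)^3 * (((k:ℝ)+1) * x^((j+1)*(k+1))))
        = fun j : ℕ => ((k:ℝ)+1) * (((j:ℝ)+1)^3 * (x^(k+1))^(j+1)) := by
      funext j
      rw [← pow_mul]
      rw [show (k+1)*(j+1) = (j+1)*(k+1) from Nat.mul_comm _ _]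
      ring
    rw [hterm]
    exact h
  have hswap : (∑' j : ℕ, ∑' k : ℕ, ((j:ℝ)+1)^3 * (((k:ℝ)+1) * x^((j+1)*(k+1))))
      = ∑' k : ℕ, ∑' j : ℕ, ((j:ℝ)+1)^3 * (((k:ℝ)+1) * x^((j+1)*(k+1))) := by
    have hF' : Summable (Function.uncurry
        fun (j k : ℕ) => ((j:ℝ)+1)^3 * (((k:ℝ)+1) * x^((j+1)*(k+1)))) := hF
    exact (Summable.tsum_comm hF').symm
  have hbQ : bQ x = ∑' k : ℕ,
      ((k:ℝ)+1) * (x^(k+1) * (1 + 4*x^(k+1) + (x^(k+1))^2) / (1 - x^(k+1))^4) := by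
    unfold bQ
    calc (∑' j : ℕ, ((j + 1 : ℝ) ^ 3 * x ^ (j + 1)) / (1 - x ^ (j + 1)) ^ 2)
        = ∑' j : ℕ, ∑' k : ℕ, ((j:ℝ)+1)^3 * (((k:ℝ)+1) * x^((j+1)*(k+1))) := by
          refine tsum_congr (fun j => ?_)
          exact ((hinner j).tsum_eq).symm
      _ = ∑' k : ℕ, ∑' j : ℕ, ((j:ℝ)+1)^3 * (((k:ℝ)+1) * x^((j+1)*(k+1))) := hswap
      _ = ∑' k : ℕ, ((k:ℝ)+1) * (x^(k+1) * (1 + 4*x^(k+1) + (x^(k+1))^2) / (1 - x^(k+1))^4) := by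
          refine tsum_congr (fun k => ?_)
          exact (hOuter k).tsum_eq
  rw [hbQ, ← tsum_mul_left]
  refine tsum_congr (fun k => ?_)
  have hk : ((k:ℝ)+1) ≠ 0 := by positivity
  unfold Psi
  rw [PP_exp_pow_eq k, ← hxdef, PP_pow4_div_aux t ((k:ℝ)+1) _ hk]
  ring

end Aux
section Aux2

open Real Topology

lemma PP_summable_cubes : Summable (fun k : ℕ => 1 / ((k:ℝ)+1)^3) := by
  have h : Summable (fun n : ℕ => 1 / (n:ℝ)^3) := summable_one_div_nat_pow.mpr (by norm_num)
  have h2 := (summable_nat_add_iff 1).mpr h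
  refine h2.congr (fun k => ?_)
  push_cast
  norm_num

lemma PP_zeta3_eq : zeta3 = ∑' k : ℕ, 1 / ((k:ℝ)+1)^3 := by
  have h := zeta_eq_tsum_one_div_nat_add_one_cpow (s := 3) (by norm_num)
  have hterm : ∀ n : ℕ, (1 / ((n:ℂ) + 1) ^ (3:ℂ)) = (((1 / ((n:ℝ)+1)^3 : ℝ)) : ℂ) := by
    intro n
    rw [show (3:ℂ) = ((3:ℕ):ℂ) by norm_num, Complex.cpow_natCast]
    push_cast
    norm_num
  unfold zeta3
  rw [h]
  have hsum : Summable (fun n : ℕ => 1 / ((n:ℂ) + 1) ^ (3:ℂ)) := by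
    rw [show (fun n : ℕ => 1 / ((n:ℂ) + 1) ^ (3:ℂ)) = fun n : ℕ => (((1 / ((n:ℝ)+1)^3 : ℝ)) : ℂ)
      from funext hterm]
    exact Complex.ofRealCLM.summable PP_summable_cubes
  rw [Complex.re_tsum hsum]
  refine tsum_congr (fun n => ?_)
  rw [hterm n, Complex.ofReal_re]

lemma PP_zeta3_pos : 0 < zeta3 := by
  rw [PP_zeta3_eq]
  exact Summable.tsum_pos PP_summable_cubes (fun k => by positivity) 0 (by norm_num)

lemma PP_mul_tendsto_zero (k : ℕ) :
    Filter.Tendsto (fun t : ℝ => ((k:ℝ)+1)*t) (𝓝[>] (0:ℝ)) (𝓝[>] (0:ℝ)) := by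
  have hk1 : (0:ℝ) < (k:ℝ)+1 := by positivity
  apply tendsto_nhdsWithin_of_tendsto_nhds_of_eventually_within
  · have hc : Continuous (fun t : ℝ => ((k:ℝ)+1)*t) := by continuity
    have h := hc.tendsto (0:ℝ)
    simp only [mul_zero] at h
    exact h.mono_left (nhdsWithin_le_nhds (s := Set.Ioi (0:ℝ)))
  · filter_upwards [self_mem_nhdsWithin] with t ht
    exact Set.mem_Ioi.2 (mul_pos hk1 (Set.mem_Ioi.1 ht))

lemma PP_tendsto_t3_aQ :
    Filter.Tendsto (fun t : ℝ => t^3 * aQ (Real.exp (-t))) (𝓝[>] (0:ℝ)) (𝓝 (2*zeta3)) := by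
  have hmain : Filter.Tendsto (fun t : ℝ => ∑' k : ℕ, Phi (((k:ℝ)+1)*t) / ((k:ℝ)+1)^3)
      (𝓝[>] (0:ℝ)) (𝓝 (∑' k : ℕ, 2 / ((k:ℝ)+1)^3)) := by
    apply tendsto_tsum_of_dominated_convergence (bound := fun k : ℕ => 54 / ((k:ℝ)+1)^3)
    · refine (PP_summable_cubes.mul_left 54).congr (fun k => ?_)
      rw [mul_one_div]
    · intro k
      exact (PP_Phi_tendsto.comp (PP_mul_tendsto_zero k)).div_const _
    · filter_upwards [self_mem_nhdsWithin] with t ht k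
      have hs : 0 < ((k:ℝ)+1)*t := by
        have := Set.mem_Ioi.1 ht; positivity
      rw [Real.norm_eq_abs, abs_of_nonneg (div_nonneg (PP_Phi_nonneg hs) (by positivity))]
      gcongr
      exact PP_Phi_bound hs
  have hval : (∑' k : ℕ, 2/((k:ℝ)+1)^3) = 2 * zeta3 := by
    rw [PP_zeta3_eq, ← tsum_mul_left]
    refine tsum_congr (fun k => ?_)
    rw [mul_one_div]
  rw [hval] at hmain
  refine Filter.Tendsto.congr' ?_ hmain
  filter_upwards [self_mem_nhdsWithin] with t ht
  exact (PP_aQ_eq (Set.mem_Ioi.1 ht)).symm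

lemma PP_tendsto_t4_bQ :
    Filter.Tendsto (fun t : ℝ => t^4 * bQ (Real.exp (-t))) (𝓝[>] (0:ℝ)) (𝓝 (6*zeta3)) := by
  have hmain : Filter.Tendsto (fun t : ℝ => ∑' k : ℕ, Psi (((k:ℝ)+1)*t) / ((k:ℝ)+1)^3)
      (𝓝[>] (0:ℝ)) (𝓝 (∑' k : ℕ, 6 / ((k:ℝ)+1)^3)) := by
    apply tendsto_tsum_of_dominated_convergence (bound := fun k : ℕ => 1536 / ((k:ℝ)+1)^3)
    · refine (PP_summable_cubes.mul_left 1536).congr (fun k => ?_)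
      rw [mul_one_div]
    · intro k
      exact (PP_Psi_tendsto.comp (PP_mul_tendsto_zero k)).div_const _
    · filter_upwards [self_mem_nhdsWithin] with t ht k
      have hs : 0 < ((k:ℝ)+1)*t := by
        have := Set.mem_Ioi.1 ht; positivity
      rw [Real.norm_eq_abs, abs_of_nonneg (div_nonneg (PP_Psi_nonneg hs) (by positivity))]
      gcongr
      exact PP_Psi_bound hs
  have hval : (∑' k : ℕ, 6/((k:ℝ)+1)^3) = 6 * zeta3 := by
    rw [PP_zeta3_eq, ← tsum_mul_left]
    refine tsum_congr (fun k => ?_)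
    rw [mul_one_div]
  rw [hval] at hmain
  refine Filter.Tendsto.congr' ?_ hmain
  filter_upwards [self_mem_nhdsWithin] with t ht
  exact (PP_bQ_eq (Set.mem_Ioi.1 ht)).symm

lemma PP_t3_aQ_le {t : ℝ} (ht : 0 < t) : t^3 * aQ (Real.exp (-t)) ≤ 54 * zeta3 := by
  rw [PP_aQ_eq ht, PP_zeta3_eq, ← tsum_mul_left]
  have hb : Summable (fun k : ℕ => 54 * (1/((k:ℝ)+1)^3)) := PP_summable_cubes.mul_left 54
  have hle : ∀ k : ℕ, Phi (((k:ℝ)+1)*t) / ((k:ℝ)+1)^3 ≤ 54 * (1/((k:ℝ)+1)^3) := by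
    intro k
    have hs : 0 < ((k:ℝ)+1)*t := by positivity
    rw [mul_one_div]
    gcongr
    exact PP_Phi_bound hs
  have hnn : ∀ k : ℕ, 0 ≤ Phi (((k:ℝ)+1)*t) / ((k:ℝ)+1)^3 := by
    intro k
    have hs : 0 < ((k:ℝ)+1)*t := by positivity
    exact div_nonneg (PP_Phi_nonneg hs) (by positivity)
  exact Summable.tsum_le_tsum hle (Summable.of_nonneg_of_le hnn hle hb) hb

end Aux2

open scoped Topology in
theorem stmt_2 (d : ℕ → ℝ)
    (hd : ∀ᶠ n : ℕ in atTop,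
      0 < d n ∧ aQ (Real.exp (-d n)) = n ∧
      ∀ t : ℝ, 0 < t → aQ (Real.exp (-t)) = n → t = d n) :
    (fun n : ℕ => bQ (Real.exp (-d n)))
      ~[atTop] fun n : ℕ => 3 * (n : ℝ) ^ ((4:ℝ)/3) / (2 * zeta3) ^ ((1:ℝ)/3) := by
  have hz := PP_zeta3_pos
  have h2z : (0:ℝ) < 2 * zeta3 := by linarith
  have hdpos : ∀ᶠ n : ℕ in atTop, 0 < d n := hd.mono (fun n h => h.1)
  have haQn : ∀ᶠ n : ℕ in atTop, aQ (Real.exp (-d n)) = n := hd.mono (fun n h => h.2.1)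
  have hbound : ∀ᶠ n : ℕ in atTop, (n:ℝ) * d n ^ 3 ≤ 54 * zeta3 := by
    filter_upwards [hdpos, haQn] with n h1 h2
    have h3 := PP_t3_aQ_le h1
    rw [h2] at h3
    rw [mul_comm]
    exact h3
  -- d n → 0 within Ioi 0
  have hdle : ∀ᶠ n : ℕ in atTop, d n ≤ (54*zeta3 / n) ^ ((1:ℝ)/3) := by
    filter_upwards [hdpos, hbound, Filter.eventually_ge_atTop 1] with n h1 h2 h3
    have hn0 : (0:ℝ) < n := by exact_mod_cast h3
    have hcube : d n ^ (3:ℕ) ≤ 54*zeta3 / n := by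
      rw [le_div_iff₀ hn0, mul_comm]
      exact h2
    have h4 : (d n ^ (3:ℕ)) ^ ((1:ℝ)/3) ≤ (54*zeta3/(n:ℝ)) ^ ((1:ℝ)/3) :=
      Real.rpow_le_rpow (by positivity) hcube (by norm_num)
    calc d n = (d n ^ (3:ℕ)) ^ ((1:ℝ)/3) := by
          rw [← Real.rpow_natCast (d n) 3, ← Real.rpow_mul h1.le]
          norm_num
      _ ≤ _ := h4
  have hupper : Tendsto (fun n : ℕ => (54*zeta3 / (n:ℝ)) ^ ((1:ℝ)/3)) atTop (𝓝 0) := by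
    have h0 : Tendsto (fun n : ℕ => 54*zeta3 / (n:ℝ)) atTop (𝓝 0) :=
      tendsto_const_div_atTop_nhds_zero_nat _
    have h5 := h0.rpow_const (p := (1:ℝ)/3) (Or.inr (by norm_num))
    simpa [Real.zero_rpow] using h5
  have hdzero : Tendsto d atTop (𝓝 0) :=
    tendsto_of_tendsto_of_tendsto_of_le_of_le' tendsto_const_nhds hupper
      (hdpos.mono fun n h => h.le) hdle
  have hdlim : Tendsto d atTop (𝓝[>] (0:ℝ)) :=
    tendsto_nhdsWithin_of_tendsto_nhds_of_eventually_within _ hdzero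
      (hdpos.mono fun n h => Set.mem_Ioi.2 h)
  -- main limits
  have hEq : ((fun t : ℝ => t^3 * aQ (Real.exp (-t))) ∘ d)
      =ᶠ[atTop] (fun n : ℕ => (n:ℝ) * d n ^ 3) := by
    filter_upwards [haQn] with n h
    simp only [Function.comp_apply]
    rw [h, mul_comm]
  have h1 : Tendsto (fun n : ℕ => (n:ℝ) * d n ^ 3) atTop (𝓝 (2*zeta3)) :=
    Tendsto.congr' hEq (PP_tendsto_t3_aQ.comp hdlim)
  have h2b : Tendsto (fun n : ℕ => d n ^ 4 * bQ (Real.exp (-d n))) atTop (𝓝 (6*zeta3)) :=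
    PP_tendsto_t4_bQ.comp hdlim
  have hA : Tendsto (fun n : ℕ => ((n:ℝ) * d n ^ 3) ^ ((4:ℝ)/3)) atTop
      (𝓝 ((2*zeta3) ^ ((4:ℝ)/3))) := h1.rpow_const (Or.inl (ne_of_gt h2z))
  have hden_ne : (3:ℝ) * (2*zeta3)^((4:ℝ)/3) ≠ 0 :=
    (mul_pos three_pos (Real.rpow_pos_of_pos h2z _)).ne'
  have hB := (h2b.mul_const ((2*zeta3)^((1:ℝ)/3))).div (hA.const_mul 3) hden_ne
  have hlim1 : (6*zeta3) * (2*zeta3)^((1:ℝ)/3) / (3 * (2*zeta3)^((4:ℝ)/3)) = 1 := by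
    rw [show (4:ℝ)/3 = 1/3 + 1 by norm_num, Real.rpow_add h2z, Real.rpow_one]
    have hne : (2*zeta3)^((1:ℝ)/3) ≠ 0 := (Real.rpow_pos_of_pos h2z _).ne'
    field_simp
    ring
  rw [hlim1] at hB
  rw [isEquivalent_iff_tendsto_one ?hz]
  case hz =>
    filter_upwards [Filter.eventually_ge_atTop 1] with n hn
    have hn0 : (0:ℝ) < n := by exact_mod_cast hn
    have hp1 : (0:ℝ) < (n:ℝ)^((4:ℝ)/3) := Real.rpow_pos_of_pos hn0 _
    have hp2 : (0:ℝ) < (2*zeta3)^((1:ℝ)/3) := Real.rpow_pos_of_pos h2z _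
    exact (div_pos (by positivity) hp2).ne'
  refine Tendsto.congr' ?_ hB
  filter_upwards [hdpos, Filter.eventually_ge_atTop 1] with n h1n hn
  have hn0 : (0:ℝ) < n := by exact_mod_cast hn
  have hkey : ((n:ℝ) * d n ^ 3) ^ ((4:ℝ)/3) = (n:ℝ)^((4:ℝ)/3) * d n ^ (4:ℕ) := by
    rw [Real.mul_rpow hn0.le (by positivity)]
    congr 1
    rw [← Real.rpow_natCast (d n) 3, ← Real.rpow_mul h1n.le,
      show ((3:ℕ):ℝ)*((4:ℝ)/3) = ((4:ℕ):ℝ) by norm_num, Real.rpow_natCast]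
  simp only [Pi.div_apply]
  rw [hkey]
  have hd0 : d n ≠ 0 := ne_of_gt h1n
  have hnr : (n:ℝ)^((4:ℝ)/3) ≠ 0 := (Real.rpow_pos_of_pos hn0 _).ne'
  have hzr : (2*zeta3)^((1:ℝ)/3) ≠ 0 := (Real.rpow_pos_of_pos h2z _).ne'
  field_simp
end

section
/- There exists a constant C>0 such that for all sufficiently small t>0 and all real θ with t ≤ |θ| ≤ π, one has |Q(e^{−t+iθ})| ≤ Q(e^{−t})·e^{−C/t}. -/
open Filter Asymptotics

/-- MacMahon's plane-partition generating function. -/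
noncomputable def Q (x : ℂ) : ℂ := ∏' j : ℕ, (1 - x ^ (j + 1)) ^ (-(j + 1 : ℤ))


lemma one_sub_pow_ne_zero {x : ℂ} (hx : ‖x‖ < 1) (j : ℕ) : 1 - x ^ (j + 1) ≠ 0 := by
  intro h
  have h1 : x ^ (j+1) = 1 := ((sub_eq_zero.mp h).symm)
  have h2 : ‖x ^ (j+1)‖ < 1 := by
    rw [norm_pow]
    exact pow_lt_one₀ (norm_nonneg x) hx (Nat.succ_ne_zero j)
  rw [h1, norm_one] at h2
  exact lt_irrefl 1 h2

lemma norm_factor (x : ℂ) (j : ℕ) :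
    ‖(1 - x ^ (j + 1)) ^ (-(j + 1 : ℤ))‖ = (‖1 - x ^ (j + 1)‖ ^ (j + 1))⁻¹ := by
  rw [norm_zpow, show -((j:ℤ)+1) = -((j+1:ℕ):ℤ) by push_cast; ring, zpow_neg, zpow_natCast]

lemma summable_aux {r : ℝ} (hr0 : 0 ≤ r) (hr : r < 1) :
    Summable (fun j : ℕ => ((j:ℝ)+1) * r ^ (j+1)) := by
  have h := summable_pow_mul_geometric_of_norm_lt_one (R := ℝ) 1
    (r := r) (by rwa [Real.norm_eq_abs, abs_of_nonneg hr0])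
  have h2 := (summable_nat_add_iff 1).mpr h
  exact h2.congr (fun j => by push_cast; ring)

lemma norm_log_factor_le {x : ℂ} (hx : ‖x‖ < 1) :
    ∀ᶠ j : ℕ in Filter.atTop,
      ‖Complex.log ((1 - x ^ (j + 1)) ^ (-(j + 1 : ℤ)))‖
        ≤ 5 * (((j:ℝ)+1) * ‖x‖ ^ (j+1)) := by
  have hS := summable_aux (norm_nonneg x) hx
  have hev : ∀ᶠ j : ℕ in Filter.atTop, ((j:ℝ)+1) * ‖x‖ ^ (j+1) < 1/16 :=
    hS.tendsto_atTop_zero.eventually_lt_const (by norm_num)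
  filter_upwards [hev] with j hj
  set s : ℝ := ‖x‖ ^ (j+1) with hs
  have hs0 : 0 ≤ s := by positivity
  have hms : ((j:ℝ)+1) * s ≤ 1/16 := hj.le
  have hs16 : s ≤ 1/16 := by nlinarith [Nat.cast_nonneg (α := ℝ) j]
  have hw : ‖x ^ (j+1)‖ = s := by rw [norm_pow]
  have h0 : 1 - x ^ (j+1) ≠ 0 := one_sub_pow_ne_zero hx j
  have hanorm : 1 - s ≤ ‖1 - x ^ (j+1)‖ := by
    calc 1 - s = ‖(1:ℂ)‖ - ‖x ^ (j+1)‖ := by rw [norm_one, hw]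
    _ ≤ ‖1 - x ^ (j+1)‖ := norm_sub_norm_le _ _
  have h1s : (0:ℝ) < 1 - s := by linarith
  set a : ℂ := (1 - x ^ (j+1))⁻¹ with ha
  have hainv : ‖a‖ ≤ (1-s)⁻¹ := by
    rw [ha, norm_inv]
    exact inv_anti₀ h1s hanorm
  have hFa : (1 - x ^ (j+1)) ^ (-(j + 1 : ℤ)) = a ^ (j+1) := by
    rw [show -((j:ℤ)+1) = -((j+1:ℕ):ℤ) by push_cast; ring, zpow_neg, zpow_natCast, ha, inv_pow]
  -- Bernoulli: (1-s)^(j+1) ≥ 1 - (j+1)s ≥ 15/16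
  have hbern : (15/16 : ℝ) ≤ (1-s) ^ (j+1) := by
    have h2 := one_add_mul_le_pow (a := -s) (by linarith) (j+1)
    rw [show (1:ℝ) + -s = 1 - s by ring] at h2
    push_cast at h2
    nlinarith
  have hMpow : ‖a‖ ^ (j+1) ≤ 16/15 := by
    calc ‖a‖ ^ (j+1) ≤ ((1-s)⁻¹) ^ (j+1) := by gcongr
    _ = ((1-s) ^ (j+1))⁻¹ := by rw [inv_pow]
    _ ≤ (15/16 : ℝ)⁻¹ := by
        apply inv_anti₀ (by norm_num) hbern
    _ = 16/15 := by norm_num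
  have haM : ‖a‖ ≤ 16/15 := by
    calc ‖a‖ ≤ (1-s)⁻¹ := hainv
    _ ≤ (15/16:ℝ)⁻¹ := inv_anti₀ (by norm_num) (by linarith)
    _ = 16/15 := by norm_num
  have ha1 : ‖a - 1‖ ≤ s * (16/15) := by
    have heq : a - 1 = x ^ (j+1) * a := by
      rw [ha]
      field_simp
      ring
    rw [heq, norm_mul, hw]
    exact mul_le_mul_of_nonneg_left haM hs0
  -- geometric sum bound
  have hu : ‖a ^ (j+1) - 1‖ ≤ ((j:ℝ)+1) * (16/15) * (s * (16/15)) := by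
    have hgs : (∑ i ∈ Finset.range (j+1), a ^ i) * (a - 1) = a ^ (j+1) - 1 := geom_sum_mul a (j+1)
    calc ‖a ^ (j+1) - 1‖ = ‖(∑ i ∈ Finset.range (j+1), a ^ i) * (a - 1)‖ := by rw [hgs]
    _ = ‖∑ i ∈ Finset.range (j+1), a ^ i‖ * ‖a - 1‖ := norm_mul _ _
    _ ≤ (((j:ℝ)+1) * (16/15)) * (s * (16/15)) := by
        apply mul_le_mul _ ha1 (norm_nonneg _) (by positivity)
        calc ‖∑ i ∈ Finset.range (j+1), a ^ i‖ ≤ ∑ i ∈ Finset.range (j+1), ‖a ^ i‖ :=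
              norm_sum_le _ _
        _ ≤ ∑ _i ∈ Finset.range (j+1), (16/15 : ℝ) := by
            apply Finset.sum_le_sum
            intro i hi
            rw [norm_pow]
            calc ‖a‖ ^ i ≤ ((1-s)⁻¹) ^ i := by gcongr
            _ ≤ ((1-s)⁻¹) ^ (j+1) := by
                apply pow_le_pow_right₀ _ (le_of_lt (Finset.mem_range.mp hi))
                have h3 := inv_anti₀ h1s (by linarith : 1-s ≤ 1)
                simpa using h3
            _ = ((1-s) ^ (j+1))⁻¹ := by rw [inv_pow]
            _ ≤ (15/16 : ℝ)⁻¹ := inv_anti₀ (by norm_num) hbern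
            _ = 16/15 := by norm_num
        _ = ((j:ℝ)+1) * (16/15) := by
            rw [Finset.sum_const, Finset.card_range]
            push_cast; ring
  have humax : ‖a ^ (j+1) - 1‖ ≤ 1/2 := by
    calc ‖a ^ (j+1) - 1‖ ≤ ((j:ℝ)+1) * (16/15) * (s * (16/15)) := hu
    _ = (((j:ℝ)+1) * s) * (256/225) := by ring
    _ ≤ (1/16) * (256/225) := by nlinarith
    _ ≤ 1/2 := by norm_num
  rw [hFa]
  have hlog : ‖Complex.log (a ^ (j+1))‖ ≤ (3/2) * ‖a ^ (j+1) - 1‖ := by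
    have := Complex.norm_log_one_add_half_le_self (z := a ^ (j+1) - 1) humax
    simpa using this
  calc ‖Complex.log (a ^ (j+1))‖ ≤ (3/2) * ‖a ^ (j+1) - 1‖ := hlog
  _ ≤ (3/2) * (((j:ℝ)+1) * (16/15) * (s * (16/15))) := by nlinarith [hu]
  _ = (((j:ℝ)+1) * s) * (384/225) := by ring
  _ ≤ 5 * (((j:ℝ)+1) * s) := by nlinarith [mul_nonneg (by positivity : (0:ℝ) ≤ (j:ℝ)+1) hs0]

lemma summable_log_complex {x : ℂ} (hx : ‖x‖ < 1) :
    Summable (fun j : ℕ => Complex.log ((1 - x ^ (j + 1)) ^ (-(j + 1 : ℤ)))) := by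
  apply Summable.of_norm_bounded_eventually_nat
    (g := fun j => 5 * (((j:ℝ)+1) * ‖x‖ ^ (j+1)))
    ((summable_aux (norm_nonneg x) hx).mul_left 5)
  exact norm_log_factor_le hx

lemma summable_log_real {x : ℂ} (hx : ‖x‖ < 1) :
    Summable (fun j : ℕ => Real.log ((‖1 - x ^ (j + 1)‖ ^ (j + 1))⁻¹)) := by
  apply Summable.of_norm_bounded_eventually_nat
    (g := fun j => 5 * (((j:ℝ)+1) * ‖x‖ ^ (j+1)))
    ((summable_aux (norm_nonneg x) hx).mul_left 5)
  filter_upwards [norm_log_factor_le hx] with j hj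
  have heq : Real.log ((‖1 - x ^ (j + 1)‖ ^ (j + 1))⁻¹)
      = (Complex.log ((1 - x ^ (j + 1)) ^ (-(j + 1 : ℤ)))).re := by
    rw [Complex.log_re, norm_factor]
  rw [Real.norm_eq_abs, heq]
  exact le_trans (Complex.abs_re_le_norm _) hj

lemma factor_pos {x : ℂ} (hx : ‖x‖ < 1) (j : ℕ) :
    0 < (‖1 - x ^ (j + 1)‖ ^ (j + 1))⁻¹ := by
  have h := norm_pos_iff.mpr (one_sub_pow_ne_zero hx j)
  positivity

lemma norm_Q_eq {x : ℂ} (hx : ‖x‖ < 1) :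
    ‖Q x‖ = Real.exp (∑' j : ℕ, Real.log ((‖1 - x ^ (j + 1)‖ ^ (j + 1))⁻¹)) := by
  have hne : ∀ j : ℕ, (1 - x ^ (j+1)) ^ (-(j+1:ℤ)) ≠ 0 :=
    fun j => zpow_ne_zero _ (one_sub_pow_ne_zero hx j)
  have hmult : Multipliable (fun j : ℕ => (1 - x ^ (j+1)) ^ (-(j+1:ℤ))) :=
    Complex.multipliable_of_summable_log (summable_log_complex hx)
  rw [Q, Multipliable.norm_tprod hmult]
  have h1 : ∏' j : ℕ, ‖(1 - x ^ (j+1)) ^ (-(j+1:ℤ))‖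
      = ∏' j : ℕ, (‖1 - x ^ (j+1)‖ ^ (j+1))⁻¹ := tprod_congr (norm_factor x)
  rw [h1]
  have h2 := Real.rexp_tsum_eq_tprod
    (f := fun j => (‖1 - x ^ (j+1)‖ ^ (j+1))⁻¹)
    (fun j => factor_pos hx j) (summable_log_real hx)
  have h3 := h2
  exact h3.symm

open Real

-- quantitative cosine bound
lemma cos_eighth_le : Real.cos (1/8) ≤ 1 - 1/200 := by
  have h16 : (1:ℝ)/16 - (1/16)^3/4 < Real.sin (1/16) :=
    by have := Real.sin_gt_sub_cube (x := 1/16) (by norm_num); norm_num at this ⊢; linarith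
  have h2 : Real.cos (1/8) = 1 - 2 * Real.sin (1/16)^2 := by
    have := Real.cos_two_mul (1/16)
    have h3 := Real.sin_sq_add_cos_sq (1/16 : ℝ)
    rw [show (1/8 : ℝ) = 2 * (1/16) by norm_num, this]
    nlinarith
  nlinarith [sq_nonneg (Real.sin (1/16) - 1/17)]

lemma close_of_cos_big {y : ℝ} (h : 1 - 1/200 < Real.cos y) :
    |y - 2*π*(round (y/(2*π)))| < 1/8 := by
  set k : ℤ := round (y/(2*π)) with hk
  have hpi := Real.pi_gt_three
  have h2pi : (0:ℝ) < 2*π := by linarith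
  have hd : |y/(2*π) - k| ≤ 1/2 := abs_sub_round _
  have hdle : |y - 2*π*k| ≤ π := by
    have heq : y - 2*π*k = (y/(2*π) - k) * (2*π) := by
      field_simp
    rw [heq, abs_mul, abs_of_pos h2pi]
    calc |y/(2*π) - k| * (2*π) ≤ (1/2) * (2*π) := by gcongr
    _ = π := by ring
  have hcos : Real.cos (y - 2*π*k) = Real.cos y := by
    rw [show y - 2*π*k = y - k*(2*π) by ring, Real.cos_sub_int_mul_two_pi]
  by_contra hcon
  push_neg at hcon
  have : Real.cos (y - 2*π*k) ≤ Real.cos (1/8) := by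
    rw [← Real.cos_abs]
    exact Real.cos_le_cos_of_nonneg_of_le_pi (by norm_num) hdle hcon
  rw [hcos] at this
  have := cos_eighth_le
  linarith

set_option maxHeartbeats 1000000 in
lemma exists_good_n {t φ : ℝ} (ht : 0 < t) (ht2 : t ≤ 1/4)
    (hφ1 : t ≤ φ) (hφ2 : φ ≤ π) :
    ∃ n : ℕ, 1 ≤ n ∧ (n:ℝ) * t ≤ 3/2 ∧ 1/(2*t) ≤ (n:ℝ) ∧
      1/200 ≤ 1 - Real.cos ((n:ℝ) * φ) := by
  have hpi := Real.pi_gt_three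
  set N : ℕ := ⌈1/(2*t)⌉₊ with hN
  have hNpos : (0:ℝ) < 1/(2*t) := by positivity
  have hN1 : 1/(2*t) ≤ (N:ℝ) := Nat.le_ceil _
  have hN2 : (N:ℝ) < 1/(2*t) + 1 := Nat.ceil_lt_add_one hNpos.le
  have hNge1 : 1 ≤ N := by
    have h1 : (1:ℝ) ≤ 1/(2*t) := by
      rw [le_div_iff₀ (by linarith)]; linarith
    have h2 : (1:ℝ) ≤ (N:ℝ) := h1.trans hN1
    exact_mod_cast h2
  have h2Nt : (2*N : ℝ) * t ≤ 3/2 := by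
    have : (N:ℝ) * t < 1/2 + t := by
      have := mul_lt_mul_of_pos_right hN2 ht
      rw [add_mul] at this
      calc (N:ℝ)*t < (1/(2*t))*t + 1*t := this
      _ = 1/2 + t := by field_simp
    nlinarith
  by_contra hcon
  push_neg at hcon
  -- for all n in [N, 2N], cos(nφ) > 1 - 1/200
  have hbig : ∀ n : ℕ, N ≤ n → n ≤ 2*N → 1 - 1/200 < Real.cos ((n:ℝ)*φ) := by
    intro n h1 h2
    have hn1 : 1 ≤ n := le_trans hNge1 h1
    have hnr : (n:ℝ) ≤ 2*N := by exact_mod_cast h2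
    have hnt : (n:ℝ) * t ≤ 3/2 := le_trans (by nlinarith) h2Nt
    have hnge : 1/(2*t) ≤ (n:ℝ) := le_trans hN1 (by exact_mod_cast h1)
    have := hcon n hn1 hnt hnge
    linarith
  -- the round values are constant
  set K : ℕ → ℤ := fun n => round ((n:ℝ)*φ/(2*π)) with hK
  have hclose : ∀ n : ℕ, N ≤ n → n ≤ 2*N → |(n:ℝ)*φ - 2*π*(K n)| < 1/8 := by
    intro n h1 h2
    exact close_of_cos_big (hbig n h1 h2)
  have hstep : ∀ n : ℕ, N ≤ n → n + 1 ≤ 2*N → K (n+1) = K n := by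
    intro n h1 h2
    have hc1 := hclose n h1 (by omega)
    have hc2 := hclose (n+1) (by omega) h2
    have habs1 := abs_lt.mp hc1
    have habs2 := abs_lt.mp hc2
    push_cast at habs2
    have hdk : |((K (n+1) - K n : ℤ) : ℝ)| < 1 := by
      have h2pi : (6:ℝ) < 2*π := by linarith
      rw [abs_lt]
      push_cast
      constructor
      · nlinarith
      · nlinarith
    have : K (n+1) - K n = 0 := by
      by_contra hne
      have : (1:ℤ) ≤ |K (n+1) - K n| := Int.one_le_abs (by omega)
      have : (1:ℝ) ≤ |((K (n+1) - K n : ℤ) : ℝ)| := by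
        rw [← Int.cast_abs]; exact_mod_cast this
      linarith
    omega
  have hconst : ∀ m : ℕ, m ≤ N → K (N + m) = K N := by
    intro m
    induction m with
    | zero => intro _; rfl
    | succ p ih =>
      intro hp
      have h1 : K (N + p) = K N := ih (by omega)
      have := hstep (N + p) (by omega) (by omega)
      rw [show N + (p+1) = (N + p) + 1 by ring, this, h1]
  have hKeq : K (2*N) = K N := by
    have := hconst N le_rfl
    rwa [show N + N = 2*N by ring] at this
  have hc1 := hclose N le_rfl (by omega)
  have hc2 := hclose (2*N) (by omega) le_rfl
  rw [hKeq] at hc2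
  have habs1 := abs_lt.mp hc1
  have habs2 := abs_lt.mp hc2
  push_cast at habs2
  -- Nφ < 1/4 but Nφ ≥ Nt ≥ 1/2
  have hNφ : (N:ℝ) * φ < 1/4 := by nlinarith
  have : (1:ℝ)/2 ≤ (N:ℝ) * φ := by
    have h1 : (N:ℝ) * t ≥ (1/(2*t)) * t := by nlinarith
    have h2 : (1/(2*t)) * t = 1/2 := by field_simp
    nlinarith
  linarith

lemma exp_3half_lt_5 : Real.exp (3/2) < 5 := by
  have e1 : Real.exp 1 < 2.7182818286 := Real.exp_one_lt_d9
  have h2 : Real.exp (1/2) * Real.exp (1/2) = Real.exp 1 := by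
    rw [← Real.exp_add]; norm_num
  have hp : (0:ℝ) < Real.exp (1/2) := Real.exp_pos _
  have h3 : Real.exp (1/2) < 1.7 := by nlinarith
  have h4 : Real.exp (3/2) = Real.exp 1 * Real.exp (1/2) := by
    rw [← Real.exp_add]; norm_num
  nlinarith [Real.exp_pos 1]

set_option maxHeartbeats 1000000 in
theorem stmt_3 :
    ∃ C > (0:ℝ), ∃ t₀ > (0:ℝ), ∀ t : ℝ, 0 < t → t < t₀ →
      ∀ θ : ℝ, t ≤ |θ| → |θ| ≤ Real.pi →
        ‖Q (Complex.exp (-(t:ℂ) + θ * Complex.I))‖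
          ≤ ‖Q (Real.exp (-t))‖ * Real.exp (-C / t) := by
  set C : ℝ := Real.log (501/500) / 4 with hC
  have hL : 0 < Real.log (501/500) := Real.log_pos (by norm_num)
  refine ⟨C, by positivity, 1/4, by norm_num, ?_⟩
  intro t ht ht4 θ hθ1 hθ2
  set r : ℝ := Real.exp (-t) with hrdef
  have hr0 : 0 < r := Real.exp_pos _
  have hr1 : r < 1 := Real.exp_lt_one_iff.mpr (by linarith)
  set x : ℂ := Complex.exp (-(t:ℝ) + θ * Complex.I) with hxdef
  have hxnorm : ‖x‖ = r := by
    rw [hxdef, Complex.norm_exp]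
    congr 1
    simp
  have hx1 : ‖x‖ < 1 := by rw [hxnorm]; exact hr1
  have hrc : ‖((r:ℝ) : ℂ)‖ = r := by
    rw [Complex.norm_real, Real.norm_eq_abs, abs_of_pos hr0]
  have hrc1 : ‖((r:ℝ) : ℂ)‖ < 1 := by rw [hrc]; exact hr1
  -- choose the good index n
  obtain ⟨n, hn1, hn2, hn3, hn4⟩ := exists_good_n ht (le_of_lt ht4) hθ1 hθ2
  have hcosn : Real.cos ((n:ℝ) * θ) ≤ 1 - 1/200 := by
    have h1 : (n:ℝ) * |θ| = |(n:ℝ) * θ| := by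
      rw [abs_mul, Nat.abs_cast]
    rw [h1, Real.cos_abs] at hn4
    linarith
  set R : ℝ := Real.exp (-((n:ℝ)*t)) with hRdef
  have hR0 : 0 < R := Real.exp_pos _
  have hnt0 : (0:ℝ) < (n:ℝ) * t := by
    have : (0:ℝ) < (n:ℝ) := Nat.cast_pos.mpr hn1
    positivity
  have hR1 : R < 1 := Real.exp_lt_one_iff.mpr (by linarith)
  have hRr : r ^ n = R := by
    rw [hrdef, hRdef, ← Real.exp_nat_mul]
    congr 1
    ring
  have hR5 : 1/5 ≤ R := by
    have h1 : R = (Real.exp ((n:ℝ)*t))⁻¹ := by rw [hRdef, Real.exp_neg]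
    have h2 : Real.exp ((n:ℝ)*t) ≤ Real.exp (3/2) := Real.exp_le_exp.mpr hn2
    have h3 := exp_3half_lt_5
    rw [h1]
    calc (1:ℝ)/5 = (5:ℝ)⁻¹ := by norm_num
    _ ≤ (Real.exp ((n:ℝ)*t))⁻¹ := inv_anti₀ (Real.exp_pos _) (by linarith)
  -- the special factor estimate
  have hxn : x ^ n = Complex.exp ((-((n:ℝ)*t) : ℝ) + ((n:ℝ)*θ : ℝ) * Complex.I) := by
    rw [hxdef, ← Complex.exp_nat_mul]
    congr 1
    push_cast
    ring
  have hsq : ‖1 - x ^ n‖^2 = (1 - R)^2 + 2*R*(1 - Real.cos ((n:ℝ)*θ)) := by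
    have h1 : ‖1 - x ^ n‖^2 = (1 - x^n).re^2 + (1 - x^n).im^2 := by
      rw [Complex.sq_norm, Complex.normSq_apply]; ring
    have hre : (1 - x^n).re = 1 - R * Real.cos ((n:ℝ)*θ) := by
      rw [hxn]
      simp [Complex.exp_re, hRdef]
    have him : (1 - x^n).im = -(R * Real.sin ((n:ℝ)*θ)) := by
      rw [hxn]
      simp [Complex.exp_im, hRdef]
    rw [h1, hre, him]
    nlinarith [Real.sin_sq_add_cos_sq ((n:ℝ)*θ)]
  have hfac : Real.sqrt (501/500) * (1 - R) ≤ ‖1 - x ^ n‖ := by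
    have hsqrtpos : (0:ℝ) < Real.sqrt (501/500) := Real.sqrt_pos.mpr (by norm_num)
    have h2 : (Real.sqrt (501/500) * (1 - R))^2 ≤ ‖1 - x ^ n‖^2 := by
      rw [mul_pow, Real.sq_sqrt (by norm_num : (0:ℝ) ≤ 501/500)]
      nlinarith
    have h3 : 0 ≤ Real.sqrt (501/500) * (1 - R) :=
      mul_nonneg hsqrtpos.le (by linarith)
    exact (pow_le_pow_iff_left₀ h3 (norm_nonneg _) two_ne_zero).mp h2
  -- index bookkeeping
  set j₀ : ℕ := n - 1 with hj₀def
  have hj₀ : j₀ + 1 = n := Nat.succ_pred_eq_of_pos hn1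
  have hBval : ∀ j : ℕ, ‖1 - ((r:ℝ):ℂ) ^ (j+1)‖ = 1 - r ^ (j+1) := by
    intro j
    have h1 : ((r:ℝ):ℂ) ^ (j+1) = ((r ^ (j+1) : ℝ) : ℂ) := by push_cast; ring
    have h2 : r ^ (j+1) < 1 := pow_lt_one₀ hr0.le hr1 (Nat.succ_ne_zero j)
    rw [h1, show (1:ℂ) - ((r ^ (j+1) : ℝ):ℂ) = (((1 - r^(j+1) : ℝ)):ℂ) by push_cast; ring,
      Complex.norm_real, Real.norm_eq_abs, abs_of_pos (by linarith)]
  have hxpow : ∀ j : ℕ, ‖x ^ (j+1)‖ = r ^ (j+1) := fun j => by rw [norm_pow, hxnorm]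
  have hAB : ∀ j : ℕ, ‖1 - ((r:ℝ):ℂ) ^ (j+1)‖ ≤ ‖1 - x ^ (j+1)‖ := by
    intro j
    rw [hBval j]
    calc 1 - r ^ (j+1) = ‖(1:ℂ)‖ - ‖x ^ (j+1)‖ := by rw [norm_one, hxpow j]
    _ ≤ ‖1 - x ^ (j+1)‖ := norm_sub_norm_le _ _
  rw [norm_Q_eq hx1, norm_Q_eq hrc1]
  set g : ℕ → ℝ := fun j => Real.log ((‖1 - x ^ (j+1)‖ ^ (j+1))⁻¹) with hgdef
  set h : ℕ → ℝ := fun j => Real.log ((‖1 - ((r:ℝ):ℂ) ^ (j+1)‖ ^ (j+1))⁻¹) with hhdef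
  have hg : Summable g := summable_log_real hx1
  have hh : Summable h := summable_log_real hrc1
  have hle : ∀ j, g j ≤ h j := by
    intro j
    have h1 : 0 < ‖1 - ((r:ℝ):ℂ) ^ (j+1)‖ ^ (j+1) := by
      have := norm_pos_iff.mpr (one_sub_pow_ne_zero hrc1 j)
      positivity
    have h2 : ‖1 - ((r:ℝ):ℂ) ^ (j+1)‖ ^ (j+1) ≤ ‖1 - x ^ (j+1)‖ ^ (j+1) :=
      pow_le_pow_left₀ (norm_nonneg _) (hAB j) _
    exact Real.log_le_log (factor_pos hx1 j) (inv_anti₀ h1 h2)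
  -- the special index
  have hsqp : (0:ℝ) < Real.sqrt (501/500) := Real.sqrt_pos.mpr (by norm_num)
  have h1Rpos : (0:ℝ) < 1 - R := by linarith
  have hBn : ‖1 - ((r:ℝ):ℂ) ^ (j₀+1)‖ = 1 - R := by rw [hBval, hj₀, hRr]
  have hspecial : g j₀ ≤ h j₀ - C/t := by
    have hApos := factor_pos hx1 j₀
    have hBpos := factor_pos hrc1 j₀
    have hkey : (‖1 - x ^ (j₀+1)‖ ^ (j₀+1))⁻¹
        ≤ (‖1 - ((r:ℝ):ℂ) ^ (j₀+1)‖ ^ (j₀+1))⁻¹ * Real.exp (-(C/t)) := by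
      rw [hBn, hj₀]
      have hstep1 : (Real.sqrt (501/500))^n * (1-R)^n ≤ ‖1 - x ^ n‖ ^ n := by
        rw [← mul_pow]
        exact pow_le_pow_left₀ (mul_nonneg hsqp.le h1Rpos.le) hfac _
      have hstep2 : ((Real.sqrt (501/500))^n)⁻¹ ≤ Real.exp (-(C/t)) := by
        have hlogs : Real.log (Real.sqrt (501/500)) = Real.log (501/500)/2 :=
          Real.log_sqrt (by norm_num)
        have hpow : (Real.sqrt (501/500))^n
            = Real.exp ((n:ℝ) * (Real.log (501/500)/2)) := by
          rw [← Real.exp_log (pow_pos hsqp n), Real.log_pow, hlogs]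
        rw [hpow, ← Real.exp_neg]
        apply Real.exp_le_exp.mpr
        have hmul : (1/(2*t)) * (Real.log (501/500)/2) ≤ (n:ℝ) * (Real.log (501/500)/2) :=
          mul_le_mul_of_nonneg_right hn3 (by positivity)
        have heq : (1/(2*t)) * (Real.log (501/500)/2) = C/t := by
          rw [hC]; field_simp
          norm_num
        rw [← heq]
        linarith
      calc (‖1 - x ^ n‖ ^ n)⁻¹ ≤ ((Real.sqrt (501/500))^n * (1-R)^n)⁻¹ := by
            apply inv_anti₀ _ hstep1
            positivity
      _ = ((Real.sqrt (501/500))^n)⁻¹ * ((1-R)^n)⁻¹ := by rw [mul_inv]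
      _ ≤ Real.exp (-(C/t)) * ((1-R)^n)⁻¹ := by
            apply mul_le_mul_of_nonneg_right hstep2
            positivity
      _ = ((1-R)^n)⁻¹ * Real.exp (-(C/t)) := by ring
    calc g j₀ ≤ Real.log ((‖1 - ((r:ℝ):ℂ) ^ (j₀+1)‖ ^ (j₀+1))⁻¹ * Real.exp (-(C/t))) :=
          Real.log_le_log hApos hkey
    _ = h j₀ + (-(C/t)) := by
        rw [Real.log_mul (ne_of_gt hBpos) (Real.exp_ne_zero _), Real.log_exp]
    _ = h j₀ - C/t := by ring
  -- sum it up
  set e : ℕ → ℝ := fun j => if j = j₀ then C/t else 0 with hedef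
  have heS : HasSum e (C/t) := hasSum_ite_eq j₀ (C/t)
  have hse : Summable e := heS.summable
  have hh' : Summable (fun j => h j - e j) := hh.sub hse
  have hsum : ∑' j, g j ≤ ∑' j, (h j - e j) := by
    apply Summable.tsum_le_tsum _ hg hh'
    intro j
    by_cases hj : j = j₀
    · subst hj
      simp only [hedef, if_pos rfl]
      linarith [hspecial]
    · simp only [hedef, if_neg hj, sub_zero]
      exact hle j
  have hsum2 : ∑' j, (h j - e j) = (∑' j, h j) - C/t := by
    rw [Summable.tsum_sub hh hse, heS.tsum_eq]
  calc Real.exp (∑' j, g j) ≤ Real.exp ((∑' j, h j) - C/t) := by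
        apply Real.exp_le_exp.mpr
        rw [← hsum2]
        exact hsum
  _ = Real.exp (∑' j, h j) * Real.exp (-C/t) := by
        rw [← Real.exp_add]
        congr 1
        ring
end

section
/- Let F₁(x) = Σ_{j=1}^∞ j x^j/(1−x^j) for |x|<1. Then F₁(e^{−t}) ~ ζ(2)/t² = π²/(6t²) as t→0+. -/
open Filter Asymptotics

/-- `F₁(x) = Σ_{j≥1} j xʲ/(1-xʲ)`. -/
noncomputable def F₁ (x : ℝ) : ℝ := ∑' j : ℕ, (j + 1 : ℝ) * x ^ (j + 1) / (1 - x ^ (j + 1))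

lemma sinh_le_mul_cosh {v : ℝ} (hv : 0 ≤ v) : Real.sinh v ≤ v * Real.cosh v := by
  have hmono : MonotoneOn (fun u : ℝ => u * Real.cosh u - Real.sinh u) (Set.Ici 0) := by
    apply monotoneOn_of_deriv_nonneg (convex_Ici 0)
    · exact (continuous_id.mul Real.continuous_cosh).sub Real.continuous_sinh |>.continuousOn
    · intro w _
      exact (((hasDerivAt_id w).mul (Real.hasDerivAt_cosh w)).sub
        (Real.hasDerivAt_sinh w)).differentiableAt.differentiableWithinAt
    · intro w hw
      rw [interior_Ici] at hw
      have h1 : HasDerivAt (fun u : ℝ => u * Real.cosh u - Real.sinh u)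
          (1 * Real.cosh w + w * Real.sinh w - Real.cosh w) w :=
        ((hasDerivAt_id w).mul (Real.hasDerivAt_cosh w)).sub (Real.hasDerivAt_sinh w)
      rw [h1.deriv]
      nlinarith [Real.sinh_nonneg_iff.2 (Set.mem_Ioi.1 hw).le, (Set.mem_Ioi.1 hw).le]
  have := hmono Set.self_mem_Ici hv hv
  simp only [Real.sinh_zero, Real.cosh_zero, mul_one, zero_mul, sub_zero] at this
  linarith

/-- `e^{-u}/(1-e^{-u})² = 1/(4 sinh²(u/2))`. -/
lemma exp_div_eq_sinh {u : ℝ} (hu : 0 < u) :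
    Real.exp (-u) / (1 - Real.exp (-u)) ^ 2 = 1 / (4 * Real.sinh (u / 2) ^ 2) := by
  have hs0 : 0 < Real.sinh (u / 2) := Real.sinh_pos_iff.2 (by linarith)
  have hE : Real.exp (-u) < 1 := Real.exp_lt_one_iff.2 (by linarith)
  set a := Real.exp (u / 2) with haa
  set b := Real.exp (-(u / 2)) with hbb
  have hab : a * b = 1 := by rw [haa, hbb, ← Real.exp_add]; norm_num
  have hb2 : Real.exp (-u) = b * b := by rw [hbb, ← Real.exp_add]; ring_nf
  have hsinh : Real.sinh (u / 2) = (a - b) / 2 := by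
    rw [Real.sinh_eq]
  have h1 : (0:ℝ) < 1 - b * b := by rw [← hb2]; linarith
  rw [hb2] at hE
  rw [hb2, div_eq_div_iff (by positivity) (by positivity)]
  rw [hsinh]
  linear_combination (a * b + 1 - 2 * b ^ 2) * hab

lemma term_upper {u : ℝ} (hu : 0 < u) :
    Real.exp (-u) / (1 - Real.exp (-u)) ^ 2 ≤ 1 / u ^ 2 := by
  rw [exp_div_eq_sinh hu]
  have hs : u / 2 ≤ Real.sinh (u / 2) := Real.self_le_sinh_iff.2 (by linarith)
  have : u ^ 2 ≤ 4 * Real.sinh (u / 2) ^ 2 := by nlinarith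
  apply one_div_le_one_div_of_le (by positivity) this

lemma term_lower {u : ℝ} (hu : 0 < u) :
    1 / u ^ 2 - Real.exp (-u) / (1 - Real.exp (-u)) ^ 2 ≤ 1 / 4 := by
  rw [exp_div_eq_sinh hu]
  set v := u / 2 with hv
  have hv0 : 0 < v := by positivity
  have hs0 : 0 < Real.sinh v := Real.sinh_pos_iff.2 hv0
  have hsle : Real.sinh v ≤ v * Real.cosh v := sinh_le_mul_cosh hv0.le
  have hc0 : 0 < Real.cosh v := Real.cosh_pos v
  have hcosh : Real.cosh v ^ 2 = 1 + Real.sinh v ^ 2 := by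
    rw [Real.cosh_sq]; ring
  have hs2 : Real.sinh v ^ 2 ≤ (v * Real.cosh v) ^ 2 :=
    pow_le_pow_left₀ hs0.le hsle 2
  have key : Real.sinh v ^ 2 - v ^ 2 ≤ v ^ 2 * Real.sinh v ^ 2 := by nlinarith
  have hu2 : u = 2 * v := by rw [hv]; ring
  rw [hu2, div_sub_div _ _ (by positivity) (by positivity),
    div_le_div_iff₀ (by positivity) (by norm_num)]
  nlinarith [sq_nonneg v, sq_nonneg (Real.sinh v)]

lemma rowSum {x : ℝ} (hx0 : 0 < x) (hx1 : x < 1) (m : ℕ) :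
    HasSum (fun k : ℕ => x ^ ((m + 1) * (k + 1))) (x ^ (m + 1) / (1 - x ^ (m + 1))) := by
  set r := x ^ (m + 1) with hr
  have hr0 : 0 ≤ r := by positivity
  have hr1 : r < 1 := pow_lt_one₀ hx0.le hx1 (Nat.succ_ne_zero m)
  have := (hasSum_geometric_of_lt_one hr0 hr1).mul_left r
  have heq : (fun k : ℕ => r * r ^ k) = fun k : ℕ => x ^ ((m + 1) * (k + 1)) := by
    funext k
    rw [← pow_succ', ← pow_mul]
  rw [heq] at this
  rw [div_eq_mul_inv]; exact this


lemma colSum {x : ℝ} (hx0 : 0 < x) (hx1 : x < 1) (k : ℕ) :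
    HasSum (fun j : ℕ => ((j : ℝ) + 1) * x ^ ((j + 1) * (k + 1)))
      (x ^ (k + 1) / (1 - x ^ (k + 1)) ^ 2) := by
  set y := x ^ (k + 1) with hy
  have hy0 : 0 ≤ y := by positivity
  have hy1 : y < 1 := pow_lt_one₀ hx0.le hx1 (Nat.succ_ne_zero k)
  have hnorm : ‖y‖ < 1 := by rwa [Real.norm_eq_abs, abs_of_nonneg hy0]
  have h := hasSum_coe_mul_geometric_of_norm_lt_one (𝕜 := ℝ) hnorm
  have h2 : HasSum (fun j : ℕ => ((j + 1 : ℕ) : ℝ) * y ^ (j + 1)) (y / (1 - y) ^ 2) :=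
    (hasSum_nat_add_iff (f := fun n : ℕ => (n : ℝ) * y ^ n) 1).mpr (by simpa using h)
  have heq : (fun j : ℕ => ((j : ℝ) + 1) * x ^ ((j + 1) * (k + 1)))
      = fun j : ℕ => ((j + 1 : ℕ) : ℝ) * y ^ (j + 1) := by
    funext j
    rw [hy, ← pow_mul]
    push_cast
    ring_nf
  rw [heq]
  exact h2

lemma F₁_eq {x : ℝ} (hx0 : 0 < x) (hx1 : x < 1) :
    F₁ x = ∑' k : ℕ, x ^ (k + 1) / (1 - x ^ (k + 1)) ^ 2 := by
  set f : ℕ × ℕ → ℝ := fun p => ((p.1 : ℝ) + 1) * x ^ ((p.1 + 1) * (p.2 + 1)) with hf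
  have hnn : 0 ≤ f := by
    intro p
    have : (0:ℝ) < x ^ ((p.1 + 1) * (p.2 + 1)) := by positivity
    simp only [hf, Pi.zero_apply]
    positivity
  have hrow : ∀ j : ℕ, HasSum (fun k => f (j, k))
      (((j : ℝ) + 1) * (x ^ (j + 1) / (1 - x ^ (j + 1)))) :=
    fun j => (rowSum hx0 hx1 j).mul_left _
  have hx1' : (0:ℝ) < 1 - x := by linarith
  have hbound : ∀ j : ℕ, ((j : ℝ) + 1) * (x ^ (j + 1) / (1 - x ^ (j + 1)))
      ≤ ((j : ℝ) + 1) * x ^ (j + 1) / (1 - x) := by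
    intro j
    have hxp : x ^ (j + 1) ≤ x := pow_le_of_le_one hx0.le hx1.le (Nat.succ_ne_zero j)
    have h1 : (0:ℝ) < 1 - x ^ (j + 1) := by
      have : x ^ (j+1) < 1 := pow_lt_one₀ hx0.le hx1 (Nat.succ_ne_zero j)
      linarith
    rw [mul_div_assoc]
    apply mul_le_mul_of_nonneg_left _ (by positivity)
    gcongr
  have hsumbound : Summable (fun j : ℕ => ((j : ℝ) + 1) * x ^ (j + 1) / (1 - x)) := by
    apply Summable.div_const
    have hnorm : ‖x‖ < 1 := by rwa [Real.norm_eq_abs, abs_of_nonneg hx0.le]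
    have h := (hasSum_coe_mul_geometric_of_norm_lt_one (𝕜 := ℝ) hnorm).summable
    have h2 := (summable_nat_add_iff 1).mpr h
    apply h2.congr
    intro j
    push_cast
    ring
  have hσ : Summable (fun j : ℕ => ((j : ℝ) + 1) * (x ^ (j + 1) / (1 - x ^ (j + 1)))) := by
    apply Summable.of_nonneg_of_le _ hbound hsumbound
    intro j
    have h1 : (0:ℝ) < 1 - x ^ (j + 1) := by
      have : x ^ (j+1) < 1 := pow_lt_one₀ hx0.le hx1 (Nat.succ_ne_zero j)
      linarith
    positivity
  have hsf : Summable f := by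
    rw [summable_prod_of_nonneg hnn]
    refine ⟨fun j => (hrow j).summable, ?_⟩
    apply hσ.congr
    intro j
    exact ((hrow j).tsum_eq).symm
  have h1 : F₁ x = ∑' p : ℕ × ℕ, f p := by
    rw [F₁, Summable.tsum_prod' hsf (fun j => (hrow j).summable)]
    apply tsum_congr
    intro j
    rw [(hrow j).tsum_eq, mul_div_assoc]
  rw [h1, ← (Equiv.prodComm ℕ ℕ).tsum_eq f]
  have h2 : ∑' (c : ℕ × ℕ), f ((Equiv.prodComm ℕ ℕ) c) = ∑' (k : ℕ) (j : ℕ), f (j, k) :=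
    Summable.tsum_prod' hsf.prod_symm (fun k => (colSum hx0 hx1 k).summable)
  rw [h2]
  exact tsum_congr fun k => (colSum hx0 hx1 k).tsum_eq

set_option maxHeartbeats 1000000 in
open Real in
lemma main_est {t : ℝ} (ht : 0 < t) (ht1 : t ≤ 1) :
    0 ≤ π ^ 2 / (6 * t ^ 2) - F₁ (Real.exp (-t)) ∧
    π ^ 2 / (6 * t ^ 2) - F₁ (Real.exp (-t)) ≤ 2 / t := by
  have hx0 : 0 < Real.exp (-t) := Real.exp_pos _
  have hx1 : Real.exp (-t) < 1 := Real.exp_lt_one_iff.2 (by linarith)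
  set a : ℕ → ℝ := fun k =>
    Real.exp (-(((k:ℝ) + 1) * t)) / (1 - Real.exp (-(((k:ℝ) + 1) * t))) ^ 2 with ha
  set b : ℕ → ℝ := fun k => 1 / (((k:ℝ) + 1) * t) ^ 2 with hb
  have hu : ∀ k : ℕ, (0:ℝ) < ((k:ℝ) + 1) * t := fun k => by positivity
  have hF : F₁ (Real.exp (-t)) = ∑' k, a k := by
    rw [F₁_eq hx0 hx1]
    apply tsum_congr
    intro k
    have h : Real.exp (-t) ^ (k + 1) = Real.exp (-(((k:ℝ) + 1) * t)) := by
      rw [← Real.exp_nat_mul]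
      congr 1
      push_cast
      ring
    rw [h]
  have h1 : HasSum (fun n : ℕ => 1 / (((n + 1 : ℕ)):ℝ) ^ 2) (π ^ 2 / 6) :=
    (hasSum_nat_add_iff (f := fun n : ℕ => 1 / (n:ℝ) ^ 2) 1).mpr (by simpa using hasSum_zeta_two)
  have hbsum : HasSum b (π ^ 2 / (6 * t ^ 2)) := by
    have h2 := h1.mul_right (1 / t ^ 2)
    have heqb : b = fun n : ℕ => 1 / (((n + 1 : ℕ)):ℝ) ^ 2 * (1 / t ^ 2) := by
      funext k
      rw [hb]
      push_cast
      rw [mul_pow]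
      rw [div_mul_div_comm, one_mul]
    have hval : π ^ 2 / (6 * t ^ 2) = π ^ 2 / 6 * (1 / t ^ 2) := by
      field_simp
    rw [heqb, hval]
    exact h2
  have hanonneg : ∀ k, 0 ≤ a k := fun k =>
    div_nonneg (Real.exp_pos _).le (sq_nonneg _)
  have hab : ∀ k, a k ≤ b k := fun k => term_upper (hu k)
  have hd4 : ∀ k, b k - a k ≤ 1 / 4 := fun k => term_lower (hu k)
  have hsa : Summable a := Summable.of_nonneg_of_le hanonneg hab hbsum.summable
  have hd : Summable (fun k => b k - a k) := hbsum.summable.sub hsa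
  have hDval : ∑' k, (b k - a k) = π ^ 2 / (6 * t ^ 2) - F₁ (Real.exp (-t)) := by
    rw [Summable.tsum_sub hbsum.summable hsa, hbsum.tsum_eq, hF]
  have hdnn : ∀ k, 0 ≤ b k - a k := fun k => sub_nonneg.2 (hab k)
  constructor
  · rw [← hDval]
    exact tsum_nonneg hdnn
  -- the upper bound
  set N : ℕ := ⌈1 / t⌉₊ with hN
  have hN0 : 0 < N := Nat.ceil_pos.2 (by positivity)
  have hNge : 1 / t ≤ (N:ℝ) := Nat.le_ceil _
  have hNlt : (N:ℝ) < 1 / t + 1 := Nat.ceil_lt_add_one (by positivity)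
  have hinvt : 1 ≤ 1 / t := by rw [le_div_iff₀ ht]; linarith
  have hNle2 : (N:ℝ) ≤ 2 / t := by
    have : 1 / t + 1 ≤ 2 / t := by
      have : 2 / t = 1 / t + 1 / t := by ring
      linarith
    linarith
  have hNR : (1:ℝ) ≤ (N:ℝ) := by exact_mod_cast hN0
  have hNinv : 1 / (N:ℝ) ≤ t := by
    rw [div_le_iff₀ (by positivity)]
    calc (1:ℝ) = t * (1 / t) := by field_simp
    _ ≤ t * N := by
        apply mul_le_mul_of_nonneg_left hNge ht.le
  -- telescoping tail bound
  have htendsto : Tendsto (fun n : ℕ => 1 / ((n:ℝ) + N)) atTop (nhds 0) := by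
    have h3 : Tendsto (fun n : ℕ => (n:ℝ) + N) atTop atTop :=
      Filter.tendsto_atTop_add_const_right atTop (N:ℝ) tendsto_natCast_atTop_atTop
    simp only [one_div]; exact h3.inv_tendsto_atTop
  have htelnn : ∀ k : ℕ, 0 ≤ 1 / ((k:ℝ) + N) - 1 / ((k:ℝ) + N + 1) := by
    intro k
    have h4 : (0:ℝ) < (k:ℝ) + N := by positivity
    have := one_div_le_one_div_of_le h4 (by linarith : (k:ℝ) + N ≤ (k:ℝ) + N + 1)
    linarith
  have htel : HasSum (fun k : ℕ => 1 / ((k:ℝ) + N) - 1 / ((k:ℝ) + N + 1)) (1 / (N:ℝ)) := by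
    rw [hasSum_iff_tendsto_nat_of_nonneg htelnn]
    have hps : ∀ n : ℕ, ∑ i ∈ Finset.range n, (1 / ((i:ℝ) + N) - 1 / ((i:ℝ) + N + 1))
        = 1 / (N:ℝ) - 1 / ((n:ℝ) + N) := by
      intro n
      induction n with
      | zero => simp
      | succ m ih =>
        rw [Finset.sum_range_succ, ih]
        push_cast
        ring
    have h5 : Tendsto (fun n : ℕ => 1 / (N:ℝ) - 1 / ((n:ℝ) + N)) atTop (nhds (1 / (N:ℝ) - 0)) :=
      tendsto_const_nhds.sub htendsto
    rw [sub_zero] at h5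
    exact Tendsto.congr (fun n => (hps n).symm) h5
  have hterm : ∀ k : ℕ, b (k + N) - a (k + N)
      ≤ (1 / t ^ 2) * (1 / ((k:ℝ) + N) - 1 / ((k:ℝ) + N + 1)) := by
    intro k
    have hm : (1:ℝ) ≤ (k:ℝ) + N := by
      have : (0:ℝ) ≤ (k:ℝ) := Nat.cast_nonneg k
      linarith
    have hm0 : (0:ℝ) < (k:ℝ) + N := by linarith
    have hsplit : 1 / ((k:ℝ) + N) - 1 / ((k:ℝ) + N + 1)
        = 1 / (((k:ℝ) + N) * ((k:ℝ) + N + 1)) := by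
      field_simp
      ring
    rw [hsplit]
    have hbformula : b (k + N) = 1 / ((((k:ℝ) + N + 1)) * t) ^ 2 := by
      rw [hb]
      push_cast
      ring_nf
    have h6 : a (k + N) ≥ 0 := hanonneg _
    have h7 : (1 / t ^ 2) * (1 / (((k:ℝ) + N) * ((k:ℝ) + N + 1)))
        = 1 / ((((k:ℝ) + N) * ((k:ℝ) + N + 1)) * t ^ 2) := by
      rw [div_mul_div_comm, one_mul, mul_comm (t^2)]
    rw [h7, hbformula]
    have h8 : 1 / ((((k:ℝ) + N + 1)) * t) ^ 2
        ≤ 1 / ((((k:ℝ) + N) * ((k:ℝ) + N + 1)) * t ^ 2) := by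
      apply one_div_le_one_div_of_le (by positivity)
      rw [mul_pow]
      nlinarith [sq_nonneg t]
    linarith
  have htail : ∑' k, (b (k + N) - a (k + N)) ≤ 1 / t := by
    have h9 : ∑' k, (b (k + N) - a (k + N))
        ≤ ∑' k : ℕ, (1 / t ^ 2) * (1 / ((k:ℝ) + N) - 1 / ((k:ℝ) + N + 1)) := by
      exact Summable.tsum_le_tsum hterm ((summable_nat_add_iff N).mpr hd)
        ((htel.mul_left (1 / t ^ 2)).summable)
    rw [(htel.mul_left (1 / t ^ 2)).tsum_eq] at h9
    calc ∑' k, (b (k + N) - a (k + N)) ≤ 1 / t ^ 2 * (1 / (N:ℝ)) := h9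
    _ ≤ 1 / t ^ 2 * t := by
        apply mul_le_mul_of_nonneg_left hNinv (by positivity)
    _ = 1 / t := by
        field_simp
  have hhead : ∑ i ∈ Finset.range N, (b i - a i) ≤ (N:ℝ) * (1 / 4) := by
    calc ∑ i ∈ Finset.range N, (b i - a i) ≤ ∑ _i ∈ Finset.range N, (1:ℝ)/4 :=
      Finset.sum_le_sum (fun i _ => hd4 i)
    _ = (N:ℝ) * (1 / 4) := by
        rw [Finset.sum_const, Finset.card_range, nsmul_eq_mul]
  rw [← hDval, ← Summable.sum_add_tsum_nat_add N hd]
  have hq : (N:ℝ) * (1/4) ≤ (2 / t) * (1/4) := by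
    apply mul_le_mul_of_nonneg_right hNle2 (by norm_num)
  have hfin : (2 / t) * (1/4) + 1 / t ≤ 2 / t := by
    have h2t : 2 / t = 2 * (1 / t) := by ring
    have h0 : 0 < 1 / t := by positivity
    nlinarith
  linarith [htail, hhead]

theorem stmt_10 :
    (fun t : ℝ => F₁ (Real.exp (-t)))
      ~[nhdsWithin 0 (Set.Ioi 0)] fun t : ℝ => Real.pi ^ 2 / (6 * t ^ 2) := by
  rw [IsEquivalent, isLittleO_iff]
  intro c hc
  have hpi := Real.pi_pos
  have hmem : Set.Ioo (0:ℝ) (min 1 (c * Real.pi ^ 2 / 12)) ∈ nhdsWithin (0:ℝ) (Set.Ioi 0) := by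
    apply Ioo_mem_nhdsGT_of_mem
    refine ⟨le_refl _, lt_min one_pos (by positivity)⟩
  filter_upwards [hmem] with t htt
  obtain ⟨ht0, htm⟩ := htt
  have ht1 : t ≤ 1 := le_of_lt (lt_of_lt_of_le htm (min_le_left _ _))
  have htc : t ≤ c * Real.pi ^ 2 / 12 := le_of_lt (lt_of_lt_of_le htm (min_le_right _ _))
  obtain ⟨h1, h2⟩ := main_est ht0 ht1
  have hg : (0:ℝ) < Real.pi ^ 2 / (6 * t ^ 2) := by positivity
  simp only [Pi.sub_apply]
  rw [Real.norm_eq_abs, Real.norm_eq_abs, abs_of_pos hg, abs_of_nonpos (by linarith)]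
  have h3 : 2 / t ≤ c * (Real.pi ^ 2 / (6 * t ^ 2)) := by
    rw [show c * (Real.pi ^ 2 / (6 * t ^ 2)) = c * Real.pi ^ 2 / (6 * t ^ 2) by ring,
      div_le_div_iff₀ ht0 (by positivity)]
    nlinarith [mul_le_mul_of_nonneg_right htc ht0.le]
  linarith
end
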